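/- Let D = (V,A) be a finite directed multigraph containing no directed cycle, and let z : A → ℝ satisfy z_a > 0 for every arc a. Then for every arc a ∈ A, z_a ≤ Σ_{i∈V} |ρ_z(i)|. -/

import Mathlib

open Finset

/-- Net inflow `ρ_z(i)` of a vector `z : A → ℝ` at a node `i` of a finite directed
multigraph given by `tail, head : A → V`. -/
def netInflow {V A : Type*} [Fintype A] [DecidableEq V]
    (tail head : A → V) (z : A → ℝ) (i : V) : ℝ :=
  (∑ a ∈ Finset.univ.filter (fun a => head a = i), z a)
    - (∑ a ∈ Finset.univ.filter (fun a => tail a = i), z a)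

/-- From a transitive-closure step relation along arcs, extract a list (walk) of arcs. -/
lemma walk_list {V A : Type*} (tl hd : A → V) {u v : V}
    (h : Relation.TransGen (fun u v => ∃ b : A, tl b = u ∧ hd b = v) u v) :
    ∃ l : List A, ∃ hne : l ≠ [], tl (l.head hne) = u ∧ hd (l.getLast hne) = v ∧
      List.IsChain (fun b c => hd b = tl c) l := by
  induction h with
  | single hr =>
    obtain ⟨b, hb1, hb2⟩ := hr
    exact ⟨[b], by simp, by simpa, by simpa, by simp⟩
  | tail _ hr ih =>
    obtain ⟨l, hne, h1, h2, h3⟩ := ih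
    obtain ⟨b, hb1, hb2⟩ := hr
    refine ⟨l ++ [b], by simp, ?_, ?_, ?_⟩
    · rwa [List.head_append_of_ne_nil]
    · rw [List.getLast_append]
      simpa using hb2
    · rw [List.isChain_append]
      refine ⟨h3, by simp, ?_⟩
      intro x hx y hy
      simp only [List.head?_cons, Option.mem_def, Option.some.injEq] at hy
      rw [List.getLast?_eq_getLast hne, Option.mem_def, Option.some.injEq] at hx
      subst hx; subst hy
      rw [h2, hb1]

/-- Acyclicity in the "injective tails" sense implies no closed transitive walk. -/
lemma no_transGen {V A : Type*} [Fintype V] (tl hd : A → V)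
    (hacyc : ¬ ∃ k : ℕ, ∃ c : Fin (k + 1) → A,
      Function.Injective (fun i => tl (c i)) ∧
      ∀ i : Fin (k + 1), hd (c i) = tl (c (i + 1)))
    (u : V) :
    ¬ Relation.TransGen (fun u v => ∃ b : A, tl b = u ∧ hd b = v) u u := by
  classical
  intro h
  obtain ⟨l, hne, h1, h2, h3⟩ := walk_list tl hd h
  have lpos : 0 < l.length := List.length_pos_iff.mpr hne
  set e : ℕ → A := fun n => l.get ⟨n % l.length, Nat.mod_lt _ lpos⟩ with he
  have hwalk : ∀ n, hd (e n) = tl (e (n + 1)) := by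
    intro n
    have hmod : n % l.length < l.length := Nat.mod_lt _ lpos
    rcases lt_or_ge (n % l.length + 1) l.length with hlt | hge
    · have h4 := List.isChain_iff_getElem.mp h3 (n % l.length) (by omega)
      have hmm : (n + 1) % l.length = n % l.length + 1 := by
        rw [Nat.add_mod, Nat.mod_eq_of_lt (show 1 < l.length by omega),
          Nat.mod_eq_of_lt hlt]
      simp only [he]
      rw [show (⟨(n+1) % l.length, Nat.mod_lt _ lpos⟩ : Fin l.length)
        = ⟨n % l.length + 1, by omega⟩ from Fin.ext hmm]
      exact h4
    · have heq : n % l.length + 1 = l.length := by omega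
      have hmm : (n + 1) % l.length = 0 := by
        rcases Nat.lt_or_ge 1 l.length with h1' | h1'
        · rw [Nat.add_mod, Nat.mod_eq_of_lt h1', heq, Nat.mod_self]
        · have hl1 : l.length = 1 := by omega
          simp only [hl1, Nat.mod_one]
      have e1 : e n = l.getLast hne := by
        simp only [he, List.getLast_eq_getElem, List.get_eq_getElem]
        congr 1
        omega
      have e2 : e (n + 1) = l.head hne := by
        simp only [he, List.head_eq_getElem, List.get_eq_getElem]
        congr 1
      rw [e1, e2, h2, h1]
  -- pigeonhole
  set t : ℕ → V := fun n => tl (e n) with ht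
  obtain ⟨x, y, hxy, hteq⟩ := Finite.exists_ne_map_eq_of_infinite t
  have hQ : ∃ m, ∃ n, n < m ∧ t n = t m := by
    rcases Nat.lt_or_ge x y with hlt | hge
    · exact ⟨y, x, hlt, hteq⟩
    · exact ⟨x, y, by omega, hteq.symm⟩
  set m := Nat.find hQ with hm
  obtain ⟨n, hnm, htnm⟩ := Nat.find_spec hQ
  have hmin : ∀ i j : ℕ, i < j → j < m → t i ≠ t j := by
    intro i j h1 h2 h3
    exact Nat.find_min hQ h2 ⟨i, h1, h3⟩
  set k := m - n - 1 with hk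
  have hmk : m = n + k + 1 := by omega
  refine hacyc ⟨k, fun i => e (n + i.val), ?_, ?_⟩
  · intro i j hij
    by_contra hne'
    have hvne : i.val ≠ j.val := fun hv => hne' (Fin.ext hv)
    rcases Nat.lt_or_ge i.val j.val with hlt | hge
    · exact hmin (n + i.val) (n + j.val) (by omega) (by omega) hij
    · exact hmin (n + j.val) (n + i.val) (by omega) (by omega) hij.symm
  · intro i
    show hd (e (n + i.val)) = tl (e (n + ((i + 1 : Fin (k + 1))).val))
    rcases Nat.lt_or_ge i.val k with hlt | hge
    · have hv : ((i + 1 : Fin (k + 1))).val = i.val + 1 := by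
        have := Fin.val_add_one_of_lt (show i < Fin.last k from hlt)
        simpa using this
      rw [hv]
      rw [← Nat.add_assoc]; exact hwalk (n + i.val)
    · have hik : i.val = k := by omega
      have hlast : i = Fin.last k := Fin.ext (by simpa using hik)
      have hv : ((i + 1 : Fin (k + 1))).val = 0 := by
        rw [hlast]; simp
      rw [hv, hik]
      have hw := hwalk (n + k)
      rw [hw]
      show tl (e (n + k + 1)) = tl (e (n + 0))
      simp only [Nat.add_zero]
      have hteq2 : t (n + k + 1) = t n := by rw [← hmk]; exact htnm.symm
      simpa [ht] using hteq2

/-- if a finite directed multigraph `D = (V,A)` contains no directed cycle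
(no cyclic sequence of arcs with pairwise distinct tails, each arc's head being the next
arc's tail) and `z : A → ℝ` is positive on every arc, then `z_a ≤ Σ_{i∈V} |ρ_z(i)|` for
every arc `a`. -/
theorem stmt_7 {V A : Type*} [Fintype V] [Fintype A] [DecidableEq V]
    (tail head : A → V) (z : A → ℝ) (hpos : ∀ a, 0 < z a)
    (hacyc : ¬ ∃ k : ℕ, ∃ c : Fin (k + 1) → A,
      Function.Injective (fun i => tail (c i)) ∧
      ∀ i : Fin (k + 1), head (c i) = tail (c (i + 1)))
    (a : A) :
    z a ≤ ∑ i : V, |netInflow tail head z i| := by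
  classical
  set step : V → V → Prop := fun u v => ∃ b : A, tail b = u ∧ head b = v with hstep
  have hnt := no_transGen tail head hacyc
  set R : V → Prop := fun v => Relation.ReflTransGen step (head a) v with hR
  have hRclosed : ∀ b : A, R (tail b) → R (head b) := fun b hb =>
    hb.tail ⟨b, rfl, rfl⟩
  have hRhead : R (head a) := Relation.ReflTransGen.refl
  have hRtail : ¬ R (tail a) := fun hr =>
    hnt (head a) (Relation.TransGen.trans_right hr
      (Relation.TransGen.single ⟨a, rfl, rfl⟩))
  set S : Finset V := univ.filter R with hS
  have hsum : ∑ i ∈ S, netInflow tail head z i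
      = (∑ b ∈ univ.filter (fun b => R (head b)), z b)
        - (∑ b ∈ univ.filter (fun b => R (tail b)), z b) := by
    unfold netInflow
    rw [Finset.sum_sub_distrib,
      Finset.sum_fiberwise_eq_sum_filter univ S head z,
      Finset.sum_fiberwise_eq_sum_filter univ S tail z]
    simp [hS]
  have h1 : univ.filter (fun b : A => R (tail b))
      = univ.filter (fun b => R (head b) ∧ R (tail b)) := by
    ext b
    simp only [mem_filter, mem_univ, true_and]
    exact ⟨fun h => ⟨hRclosed b h, h⟩, fun h => h.2⟩
  have hsplit := Finset.sum_filter_add_sum_filter_not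
    (univ.filter (fun b : A => R (head b))) (fun b => R (tail b)) z
  rw [Finset.filter_filter, Finset.filter_filter] at hsplit
  have hdiff : (∑ b ∈ univ.filter (fun b => R (head b)), z b)
      - (∑ b ∈ univ.filter (fun b => R (tail b)), z b)
      = ∑ b ∈ univ.filter (fun b => R (head b) ∧ ¬ R (tail b)), z b := by
    rw [h1]; linarith
  calc z a ≤ ∑ b ∈ univ.filter (fun b => R (head b) ∧ ¬ R (tail b)), z b :=
        Finset.single_le_sum (fun b _ => (hpos b).le)
          (by simp only [mem_filter, mem_univ, true_and]; exact ⟨hRhead, hRtail⟩)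
    _ = ∑ i ∈ S, netInflow tail head z i := by rw [hsum, hdiff]
    _ ≤ ∑ i ∈ S, |netInflow tail head z i| :=
        Finset.sum_le_sum (fun i _ => le_abs_self _)
    _ ≤ ∑ i : V, |netInflow tail head z i| :=
        Finset.sum_le_sum_of_subset_of_nonneg (subset_univ S)
          (fun i _ _ => abs_nonneg _)
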